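/- The proximal mapping of t·g_σ, where g_σ(v) = (1/(2σ))(|v| − b)², at a nonzero point z ∈ ℂ is given by (b·e^{i·arg(z)} + (σ/t)·z)/(1 + σ/t); i.e., the unique minimizer of v ↦ (1/(2σ))(|v| − b)² + (1/(2t))|v − z|² is this linear interpolation between z and its projection onto the circle of radius b. -/

import Mathlib

set_option maxHeartbeats 1600000 in
/-- The proximal mapping of `t·g_σ`, with `g_σ(v) = (1/(2σ))(|v| - b)²`, at a nonzero
point `z : ℂ` is `(b·e^{i·arg z} + (σ/t)·z)/(1 + σ/t)`: it is the unique minimizer of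
`v ↦ (1/(2σ))(|v| - b)² + (1/(2t))|v - z|²`. -/
theorem stmt_2 (b : ℝ) (hb : 0 ≤ b) (σ t : ℝ) (hσ : 0 < σ) (ht : 0 < t)
    (z : ℂ) (hz : z ≠ 0) :
    let F : ℂ → ℝ := fun v =>
      (1 / (2 * σ)) * (‖v‖ - b) ^ 2 + (1 / (2 * t)) * ‖v - z‖ ^ 2
    let w : ℂ := ((b : ℂ) * (z / (‖z‖ : ℝ)) + ((σ / t : ℝ) : ℂ) * z) /
      ((1 + σ / t : ℝ) : ℂ)
    (∀ v : ℂ, F w ≤ F v) ∧ ∀ v : ℂ, v ≠ w → F w < F v := by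
  intro F w
  set R : ℝ := ‖z‖ with hRdef
  have hR : 0 < R := norm_pos_iff.mpr hz
  have hts : 0 < t + σ := by linarith
  set rs : ℝ := (b * t + σ * R) / (t + σ) with hrsdef
  have hrs : 0 < rs := div_pos (by nlinarith) hts
  have htC : (t : ℂ) ≠ 0 := by exact_mod_cast ht.ne'
  have hRC : (R : ℂ) ≠ 0 := by exact_mod_cast hR.ne'
  have htsC : (t + σ : ℂ) ≠ 0 := by exact_mod_cast hts.ne'
  have h1ts : (1 + σ / t : ℝ) ≠ 0 := by positivity
  have h1tsC : ((1 + σ / t : ℝ) : ℂ) ≠ 0 := by exact_mod_cast h1ts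
  -- w in closed form
  have hw : w = ((rs / R : ℝ) : ℂ) * z := by
    show ((b : ℂ) * (z / (R : ℝ)) + ((σ / t : ℝ) : ℂ) * z) / ((1 + σ / t : ℝ) : ℂ)
        = ((rs / R : ℝ) : ℂ) * z
    rw [hrsdef]
    push_cast
    field_simp
  have habsw : ‖w‖ = rs := by
    rw [hw, norm_mul, Complex.norm_real, Real.norm_eq_abs, abs_of_pos (div_pos hrs hR), ← hRdef]
    field_simp
  have hwz : ‖w - z‖ ^ 2 = (rs - R) ^ 2 := by
    have : w - z = ((rs / R - 1 : ℝ) : ℂ) * z := by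
      rw [hw]; push_cast; ring
    rw [this, norm_mul, Complex.norm_real, Real.norm_eq_abs, ← hRdef]
    rw [mul_pow, sq_abs]
    field_simp
  -- expand |v - z|^2
  have hsub : ∀ v : ℂ, ‖v - z‖ ^ 2
      = ‖v‖ ^ 2 - 2 * (v * (starRingEnd ℂ) z).re + R ^ 2 := by
    intro v
    rw [Complex.sq_norm, Complex.normSq_sub, ← Complex.sq_norm, ← Complex.sq_norm, ← hRdef]
    ring
  have hFw : F w = (1 / (2 * σ)) * (rs - b) ^ 2 + (1 / (2 * t)) * (rs - R) ^ 2 := by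
    show (1 / (2 * σ)) * (‖w‖ - b) ^ 2 + (1 / (2 * t)) * ‖w - z‖ ^ 2 = _
    rw [habsw, hwz]
  -- the key identity
  have key : ∀ v : ℂ, F v = F w + (1 / (2 * σ) + 1 / (2 * t)) * (‖v‖ - rs) ^ 2
      + (1 / t) * (R * ‖v‖ - (v * (starRingEnd ℂ) z).re) := by
    intro v
    show (1 / (2 * σ)) * (‖v‖ - b) ^ 2 + (1 / (2 * t)) * ‖v - z‖ ^ 2 = _
    rw [hFw, hsub v, hrsdef]
    field_simp
    ring
  -- nonnegativity of the cross term
  have hcross : ∀ v : ℂ, (v * (starRingEnd ℂ) z).re ≤ R * ‖v‖ := by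
    intro v
    calc (v * (starRingEnd ℂ) z).re ≤ ‖v * (starRingEnd ℂ) z‖ :=
          Complex.re_le_norm _
      _ = R * ‖v‖ := by rw [norm_mul, Complex.norm_conj, ← hRdef]; ring
  have hle : ∀ v : ℂ, F w ≤ F v := by
    intro v
    rw [key v]
    have h1 : 0 ≤ (1 / (2 * σ) + 1 / (2 * t)) * (‖v‖ - rs) ^ 2 := by positivity
    have h2 : 0 ≤ (1 / t) * (R * ‖v‖ - (v * (starRingEnd ℂ) z).re) := by
      apply mul_nonneg (by positivity)
      linarith [hcross v]
    linarith
  refine ⟨hle, fun v hv => ?_⟩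
  rw [key v]
  have h1 : 0 ≤ (1 / (2 * σ) + 1 / (2 * t)) * (‖v‖ - rs) ^ 2 := by positivity
  have h2 : 0 ≤ (1 / t) * (R * ‖v‖ - (v * (starRingEnd ℂ) z).re) := by
    apply mul_nonneg (by positivity)
    linarith [hcross v]
  rcases eq_or_ne (‖v‖) rs with hr | hr
  · -- then the cross term must be strictly positive, else v = w
    have hp : (v * (starRingEnd ℂ) z).re ≠ R * ‖v‖ := by
      intro hp
      apply hv
      -- v * conj z is a nonneg real
      have habs : ‖v * (starRingEnd ℂ) z‖ = R * ‖v‖ := by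
        rw [norm_mul, Complex.norm_conj, ← hRdef]; ring
      have him : (v * (starRingEnd ℂ) z).im = 0 := by
        have hsq := Complex.sq_norm (v * (starRingEnd ℂ) z)
        rw [Complex.normSq_apply, habs, hp] at hsq
        nlinarith [sq_nonneg ((v * (starRingEnd ℂ) z).im)]
      have heq : v * (starRingEnd ℂ) z = ((R * ‖v‖ : ℝ) : ℂ) := by
        apply Complex.ext
        · simpa using hp
        · simpa using him
      have hzz : z * (starRingEnd ℂ) z = ((R ^ 2 : ℝ) : ℂ) := by
        rw [Complex.mul_conj]
        norm_cast
        rw [← Complex.sq_norm, ← hRdef]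
      have : v * ((R ^ 2 : ℝ) : ℂ) = ((R * ‖v‖ : ℝ) : ℂ) * z := by
        rw [← hzz, ← heq]; ring
      rw [hw]
      rw [hr] at this
      push_cast at this ⊢
      rw [div_mul_eq_mul_div, eq_div_iff hRC]
      exact mul_right_cancel₀ hRC (by linear_combination this)
    have h2' : 0 < (1 / t) * (R * ‖v‖ - (v * (starRingEnd ℂ) z).re) := by
      apply mul_pos (by positivity)
      rcases lt_or_eq_of_le (hcross v) with h | h
      · linarith
      · exact absurd h hp
    linarith
  · have h1' : 0 < (1 / (2 * σ) + 1 / (2 * t)) * (‖v‖ - rs) ^ 2 := by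
      apply mul_pos (by positivity)
      have : ‖v‖ - rs ≠ 0 := sub_ne_zero.mpr hr
      positivity
    linarith
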